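/- arXiv:1802.03031 — 8 statements merged into one kernel-verified Lean document; each statement's English description precedes it below -/
import Mathlib

section
/- For each λ ∈ (0,1), the function Δ_{M,λ}(x,y) = inf{t ∈ ℝ : M(x,y,t) > λ} is a metric on X. -/
open Filter Set Topology

structure IsFuzzyMetric {X : Type*} (M : X → X → ℝ → ℝ) : Prop where
  mem_Icc : ∀ x y t, M x y t ∈ Set.Icc (0:ℝ) 1
  km1 : ∀ x y : X, ∀ t : ℝ, t ≤ 0 → M x y t = 0
  km2 : ∀ x y : X, (∀ t : ℝ, 0 < t → M x y t = 1) ↔ x = y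
  km3 : ∀ x y t, M x y t = M y x t
  km4 : ∀ x y z : X, ∀ t s : ℝ, min (M x y t) (M y z s) ≤ M x z (t + s)
  km5_left_cont : ∀ x y : X, x ≠ y → ∀ t : ℝ,
    Filter.Tendsto (M x y) (nhdsWithin t (Set.Iio t)) (nhds (M x y t))
  km5_lim : ∀ x y : X, x ≠ y → Filter.Tendsto (M x y) Filter.atTop (nhds 1)
  sdp : ∀ x y : X, x ≠ y →
    Filter.Tendsto (M x y) (nhdsWithin 0 (Set.Ioi 0)) (nhds 0)

noncomputable def Delta {X : Type*} (M : X → X → ℝ → ℝ) (lam : ℝ) (x y : X) : ℝ :=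
  sInf {t : ℝ | lam < M x y t}

noncomputable def delta {X : Type*} (M : X → X → ℝ → ℝ) (lam : ℝ) (x y : X) : ℝ :=
  sSup {t : ℝ | M x y t < lam}


theorem Delta_isMetric {X : Type*} (M : X → X → ℝ → ℝ) (hM : IsFuzzyMetric M)
    (lam : ℝ) (hlam : lam ∈ Set.Ioo (0:ℝ) 1) :
    (∀ x y : X, 0 ≤ Delta M lam x y) ∧
    (∀ x y : X, Delta M lam x y = 0 ↔ x = y) ∧
    (∀ x y : X, Delta M lam x y = Delta M lam y x) ∧
    (∀ x y z : X, Delta M lam x z ≤ Delta M lam x y + Delta M lam y z) := by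
  obtain ⟨hl0, hl1⟩ := hlam
  -- monotonicity of M x y
  have mono : ∀ x y : X, ∀ t u : ℝ, t ≤ u → M x y t ≤ M x y u := by
    intro x y t u htu
    rcases le_or_gt t 0 with h | h
    · rw [hM.km1 x y t h]; exact (hM.mem_Icc x y u).1
    rcases eq_or_lt_of_le htu with rfl | hlt
    · exact le_refl _
    have h1 : M y y (u - t) = 1 := (hM.km2 y y).mpr rfl (u - t) (by linarith)
    have h2 := hM.km4 x y y t (u - t)
    rw [h1, min_eq_left (hM.mem_Icc x y t).2] at h2
    have h3 : t + (u - t) = u := by ring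
    rwa [h3] at h2
  have nonem : ∀ x y : X, {t : ℝ | lam < M x y t}.Nonempty := by
    intro x y
    by_cases hxy : x = y
    · exact ⟨1, by simp only [Set.mem_setOf_eq, hxy,
        (hM.km2 y y).mpr rfl 1 one_pos]; exact hl1⟩
    · obtain ⟨t, ht⟩ := ((hM.km5_lim x y hxy).eventually (eventually_gt_nhds hl1)).exists
      exact ⟨t, ht⟩
  have bdd : ∀ x y : X, BddBelow {t : ℝ | lam < M x y t} := by
    intro x y
    refine ⟨0, fun t ht => ?_⟩
    by_contra h
    push_neg at h
    rw [Set.mem_setOf_eq, hM.km1 x y t (le_of_lt h)] at ht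
    linarith
  have key : ∀ x y : X, ∀ u : ℝ, Delta M lam x y < u → lam < M x y u := by
    intro x y u hu
    obtain ⟨t, ht, htu⟩ := exists_lt_of_csInf_lt (nonem x y) hu
    exact lt_of_lt_of_le ht (mono x y t u (le_of_lt htu))
  have nonneg : ∀ x y : X, 0 ≤ Delta M lam x y := by
    intro x y
    refine le_csInf (nonem x y) fun t ht => ?_
    by_contra h
    push_neg at h
    rw [Set.mem_setOf_eq, hM.km1 x y t h.le] at ht
    linarith
  refine ⟨nonneg, ?_, ?_, ?_⟩
  · -- Delta = 0 ↔ x = y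
    intro x y
    constructor
    · intro h0
      by_contra hxy
      have hev := (hM.sdp x y hxy).eventually (eventually_lt_nhds hl0)
      obtain ⟨ε, hε, hsub⟩ := (nhdsGT_basis (0:ℝ)).eventually_iff.mp hev
      have : ε ≤ Delta M lam x y := by
        refine le_csInf (nonem x y) fun t ht => ?_
        by_contra hlt
        push_neg at hlt
        have h0t : 0 < t := by
          by_contra h'
          push_neg at h'
          rw [Set.mem_setOf_eq, hM.km1 x y t h'] at ht
          linarith
        exact absurd ht (by simpa using not_lt.mpr (le_of_lt (hsub ⟨h0t, hlt⟩)))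
      linarith
    · intro hxy
      subst hxy
      refine le_antisymm ?_ (nonneg x x)
      refine le_of_forall_pos_le_add fun ε hε => ?_
      have : ε ∈ {t : ℝ | lam < M x x t} := by
        simp only [Set.mem_setOf_eq, (hM.km2 x x).mpr rfl ε hε]
        exact hl1
      simpa [Delta] using csInf_le (bdd x x) this
  · intro x y
    unfold Delta
    congr 1
    ext t
    simp [hM.km3 x y t]
  · intro x y z
    refine le_of_forall_pos_le_add fun ε hε => ?_
    set a := Delta M lam x y + ε / 2 with ha
    set b := Delta M lam y z + ε / 2 with hb
    have h1 : lam < M x y a := key x y a (by simp [ha]; linarith)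
    have h2 : lam < M y z b := key y z b (by simp [hb]; linarith)
    have h3 := hM.km4 x y z a b
    have h4 : lam < M x z (a + b) := lt_of_lt_of_le (lt_min h1 h2) h3
    have h5 : Delta M lam x z ≤ a + b := csInf_le (bdd x z) h4
    calc Delta M lam x z ≤ a + b := h5
      _ = Delta M lam x y + Delta M lam y z + ε := by rw [ha, hb]; ring
end

section
/- For each λ ∈ (0,1), the function δ_{M,λ}(x,y) = sup{t ∈ ℝ : M(x,y,t) < λ} is a metric on X. -/
open Filter Set Topology

lemma fuzzy_mono {X : Type*} {M : X → X → ℝ → ℝ} (hM : IsFuzzyMetric M)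
    (x y : X) : Monotone (M x y) := by
  intro t t' htt'
  rcases eq_or_lt_of_le htt' with rfl | h
  · exact le_rfl
  · have h1 : M y y (t' - t) = 1 := ((hM.km2 y y).mpr rfl) _ (by linarith)
    have := hM.km4 x y y t (t' - t)
    rw [h1] at this
    have hle : M x y t ≤ 1 := (hM.mem_Icc x y t).2
    have : M x y t ≤ M x y (t + (t' - t)) := by
      simpa [min_eq_left hle] using this
    simpa using this

lemma fuzzy_bdd {X : Type*} {M : X → X → ℝ → ℝ} (hM : IsFuzzyMetric M)
    {lam : ℝ} (hlam : lam ∈ Set.Ioo (0:ℝ) 1) (x y : X) :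
    BddAbove {t : ℝ | M x y t < lam} := by
  by_cases hxy : x = y
  · subst hxy
    refine ⟨0, fun t ht => ?_⟩
    by_contra h
    push_neg at h
    have := ((hM.km2 x x).mpr rfl) t h
    simp only [Set.mem_setOf_eq, this] at ht
    linarith [hlam.2]
  · have h1 : ∀ᶠ t in atTop, M x y t ∈ Set.Ioi lam :=
      (hM.km5_lim x y hxy).eventually (Ioi_mem_nhds hlam.2)
    rcases h1.exists_forall_of_atTop with ⟨T, hT⟩
    refine ⟨T, fun t ht => ?_⟩
    by_contra h
    push_neg at h
    have := hT t h.le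
    simp only [Set.mem_Ioi] at this
    exact absurd ht (by simp only [Set.mem_setOf_eq]; linarith)

lemma fuzzy_zero_mem {X : Type*} {M : X → X → ℝ → ℝ} (hM : IsFuzzyMetric M)
    {lam : ℝ} (hlam : lam ∈ Set.Ioo (0:ℝ) 1) (x y : X) :
    (0:ℝ) ∈ {t : ℝ | M x y t < lam} := by
  simp only [Set.mem_setOf_eq, hM.km1 x y 0 le_rfl]
  exact hlam.1

lemma fuzzy_ge_of_gt_delta {X : Type*} {M : X → X → ℝ → ℝ} (hM : IsFuzzyMetric M)
    {lam : ℝ} (hlam : lam ∈ Set.Ioo (0:ℝ) 1) (x y : X) {t : ℝ}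
    (ht : delta M lam x y < t) : lam ≤ M x y t := by
  by_contra h
  push_neg at h
  have : t ≤ delta M lam x y := le_csSup (fuzzy_bdd hM hlam x y) h
  linarith

theorem delta_isMetric {X : Type*} (M : X → X → ℝ → ℝ) (hM : IsFuzzyMetric M)
    (lam : ℝ) (hlam : lam ∈ Set.Ioo (0:ℝ) 1) :
    (∀ x y : X, 0 ≤ delta M lam x y) ∧
    (∀ x y : X, delta M lam x y = 0 ↔ x = y) ∧
    (∀ x y : X, delta M lam x y = delta M lam y x) ∧
    (∀ x y z : X, delta M lam x z ≤ delta M lam x y + delta M lam y z) := by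
  have hnonneg : ∀ x y : X, 0 ≤ delta M lam x y := fun x y =>
    le_csSup (fuzzy_bdd hM hlam x y) (fuzzy_zero_mem hM hlam x y)
  refine ⟨hnonneg, ?_, ?_, ?_⟩
  · intro x y
    constructor
    · intro h
      by_contra hxy
      have hev : ∀ᶠ t in nhdsWithin (0:ℝ) (Set.Ioi 0), M x y t < lam :=
        (hM.sdp x y hxy).eventually (Filter.Tendsto.eventually_lt_const hlam.1 tendsto_id)
      have hmem : ∀ᶠ t in nhdsWithin (0:ℝ) (Set.Ioi 0), t ∈ Set.Ioi (0:ℝ) :=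
        eventually_mem_nhdsWithin
      rcases (hev.and hmem).exists with ⟨t, ht1, ht2⟩
      have : t ≤ delta M lam x y := le_csSup (fuzzy_bdd hM hlam x y) ht1
      rw [h] at this
      exact absurd this (not_le.mpr ht2)
    · rintro rfl
      refine le_antisymm (csSup_le ⟨0, fuzzy_zero_mem hM hlam x x⟩ ?_) (hnonneg x x)
      intro t ht
      by_contra h
      push_neg at h
      have := ((hM.km2 x x).mpr rfl) t h
      simp only [Set.mem_setOf_eq, this] at ht
      linarith [hlam.2]
  · intro x y
    unfold delta
    congr 1
    ext t
    simp [hM.km3 x y t]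
  · intro x y z
    refine le_of_forall_pos_le_add fun ε hε => ?_
    refine csSup_le ⟨0, fuzzy_zero_mem hM hlam x z⟩ fun u hu => ?_
    set t := delta M lam x y + ε / 2 with ht
    set s := delta M lam y z + ε / 2 with hs
    have h1 : lam ≤ M x y t := fuzzy_ge_of_gt_delta hM hlam x y (by simp [ht]; linarith)
    have h2 : lam ≤ M y z s := fuzzy_ge_of_gt_delta hM hlam y z (by simp [hs]; linarith)
    have h3 : lam ≤ M x z (t + s) := le_trans (le_min h1 h2) (hM.km4 x y z t s)
    by_contra h
    push_neg at h
    have hts : t + s < u := by simp only [ht, hs] at h ⊢; linarith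
    have := fuzzy_mono hM x z hts.le
    simp only [Set.mem_setOf_eq] at hu
    linarith
end

section
/- Let M be a fuzzy metric on X. If for all x,y the limit of δ_{M,λ}(x,y) as λ → 1⁻ exists (is finite), then for all x,y the limit of Δ_{M,λ}(x,y) as λ → 1⁻ exists (is finite). -/
open Filter Set Topology

section Aux

variable {X : Type*} {M : X → X → ℝ → ℝ} (hM : IsFuzzyMetric M)
include hM

lemma M_mono (x y : X) : Monotone (M x y) := by
  intro t s hts
  rcases le_or_gt t 0 with ht | ht
  · rw [hM.km1 x y t ht]; exact (hM.mem_Icc x y s).1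
  rcases eq_or_lt_of_le hts with rfl | hlt
  · exact le_rfl
  · have h4 := hM.km4 x y y t (s - t)
    have hyy : M y y (s - t) = 1 := ((hM.km2 y y).2 rfl) _ (by linarith)
    rw [hyy, add_sub_cancel] at h4
    have := (hM.mem_Icc x y t).2
    calc M x y t = min (M x y t) 1 := (min_eq_left this).symm
    _ ≤ M x y s := h4

/-- there is T with `lam < M x y T`, for `lam < 1`. -/
lemma exists_gt (x y : X) {lam : ℝ} (hlam : lam < 1) : ∃ T, lam < M x y T := by
  rcases eq_or_ne x y with rfl | hne
  · exact ⟨1, by rw [((hM.km2 x x).2 rfl) 1 one_pos]; exact hlam⟩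
  · have := (hM.km5_lim x y hne).eventually (eventually_gt_nhds hlam)
    exact this.exists

lemma A_nonempty (x y : X) {lam : ℝ} (hlam : lam < 1) :
    {t : ℝ | lam < M x y t}.Nonempty := exists_gt hM x y hlam

lemma A_bddBelow (x y : X) {lam : ℝ} (hlam : 0 < lam) :
    BddBelow {t : ℝ | lam < M x y t} := by
  refine ⟨0, fun t ht => ?_⟩
  by_contra hc
  push_neg at hc
  rw [mem_setOf_eq, hM.km1 x y t hc.le] at ht
  linarith

lemma B_bddAbove (x y : X) {lam : ℝ} (hlam : lam < 1) :
    BddAbove {t : ℝ | M x y t < lam} := by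
  obtain ⟨T, hT⟩ := exists_gt hM x y hlam
  refine ⟨T, fun t ht => ?_⟩
  by_contra hc
  push_neg at hc
  exact absurd (lt_of_lt_of_le hT (M_mono hM x y hc.le)) (not_lt.2 ht.le)

lemma B_nonempty (x y : X) {lam : ℝ} (hlam : 0 < lam) :
    {t : ℝ | M x y t < lam}.Nonempty :=
  ⟨0, by rw [mem_setOf_eq, hM.km1 x y 0 le_rfl]; exact hlam⟩

/-- key cross inequality: `Δ_{λ₁} ≤ δ_{λ₂}` for `0 < λ₁ < λ₂ < 1`. -/
lemma Delta_le_delta (x y : X) {l1 l2 : ℝ} (h0 : 0 < l1) (h12 : l1 < l2) (h1 : l2 < 1) :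
    Delta M l1 x y ≤ delta M l2 x y := by
  by_contra hc
  push_neg at hc
  obtain ⟨t, ht1, ht2⟩ := exists_between hc
  have htB : t ∉ {s : ℝ | M x y s < l2} := fun hmem =>
    absurd (le_csSup (B_bddAbove hM x y h1) hmem) (not_le.2 ht1)
  have htA : t ∉ {s : ℝ | l1 < M x y s} := fun hmem =>
    absurd (csInf_le (A_bddBelow hM x y h0) hmem) (not_le.2 ht2)
  simp only [mem_setOf_eq, not_lt] at htA htB
  linarith

lemma Delta_mono (x y : X) {l1 l2 : ℝ} (h0 : 0 < l1) (h12 : l1 ≤ l2) (h1 : l2 < 1) :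
    Delta M l1 x y ≤ Delta M l2 x y := by
  apply csInf_le_csInf (A_bddBelow hM x y h0) (A_nonempty hM x y h1)
  intro t ht
  exact lt_of_le_of_lt h12 ht

end Aux

theorem delta_limit_implies_Delta_limit {X : Type*} (M : X → X → ℝ → ℝ)
    (hM : IsFuzzyMetric M)
    (h : ∀ x y : X, ∃ L : ℝ,
      Filter.Tendsto (fun lam => delta M lam x y)
        (nhdsWithin (1:ℝ) (Set.Iio 1)) (nhds L)) :
    ∀ x y : X, ∃ L : ℝ,
      Filter.Tendsto (fun lam => Delta M lam x y)
        (nhdsWithin (1:ℝ) (Set.Iio 1)) (nhds L) := by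
  intro x y
  obtain ⟨L, hL⟩ := h x y
  set g : ℝ → ℝ := fun lam => Delta M (max lam (1/2)) x y with hg
  -- uniform bound: for all 0 < lam < 1, Delta M lam x y ≤ L + 1
  have hbound : ∀ lam : ℝ, 0 < lam → lam < 1 → Delta M lam x y ≤ L + 1 := by
    intro lam hl0 hl1
    have hev : {l : ℝ | delta M l x y ≤ L + 1} ∈ nhdsWithin (1:ℝ) (Set.Iio 1) :=
      hL.eventually (eventually_le_nhds (by linarith))
    have hIoo : Set.Ioo lam 1 ∈ nhdsWithin (1:ℝ) (Set.Iio 1) :=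
      Ioo_mem_nhdsLT_of_mem ⟨hl1, le_rfl⟩
    obtain ⟨l', hl'1, hl'2⟩ := Filter.nonempty_of_mem (Filter.inter_mem hev hIoo)
    exact le_trans (Delta_le_delta hM x y hl0 hl'2.1 hl'2.2) hl'1
  have hmono : MonotoneOn g (Set.Iio (1:ℝ)) := by
    intro a ha b hb hab
    exact Delta_mono hM x y (lt_of_lt_of_le (by norm_num) (le_max_right _ _))
      (max_le_max hab le_rfl) (max_lt hb (by norm_num))
  have hbdd : BddAbove (g '' Set.Iio (1:ℝ)) := by
    refine ⟨L + 1, ?_⟩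
    rintro _ ⟨a, ha, rfl⟩
    exact hbound _ (lt_of_lt_of_le (by norm_num) (le_max_right _ _))
      (max_lt ha (by norm_num))
  refine ⟨sSup (g '' Set.Iio (1:ℝ)), ?_⟩
  have := hmono.tendsto_nhdsLT hbdd
  refine this.congr' ?_
  filter_upwards [Ioo_mem_nhdsLT_of_mem (⟨by norm_num, le_rfl⟩ : (1:ℝ) ∈ Set.Ioc (1/2) 1)]
    with a ha
  show Delta M (max a (1/2)) x y = Delta M a x y
  rw [max_eq_left ha.1.le]
end

section
/- Let M be a fuzzy metric on X. If for all x,y the limit of Δ_{M,λ}(x,y) as λ → 1⁻ exists and equals some t₀, then M satisfies the finite distance condition; indeed M(x,y,t₀+1) = 1. -/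
open Filter Set Topology

theorem Delta_limit_implies_fd {X : Type*} (M : X → X → ℝ → ℝ)
    (hM : IsFuzzyMetric M) :
    ∀ x y : X, ∀ t₀ : ℝ,
      Filter.Tendsto (fun lam => Delta M lam x y)
        (nhdsWithin (1:ℝ) (Set.Iio 1)) (nhds t₀) →
      M x y (t₀ + 1) = 1 := by
  intro x y t₀ hlim
  -- monotonicity of M in t
  have hmono : ∀ t s : ℝ, t ≤ s → M x y t ≤ M x y s := by
    intro t s hts
    rcases eq_or_lt_of_le hts with h | h
    · exact le_of_eq (by rw [h])
    · have h1 : M y y (s - t) = 1 := ((hM.km2 y y).mpr rfl) (s - t) (by linarith)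
      have h2 := hM.km4 x y y t (s - t)
      rw [h1] at h2
      have h3 : min (M x y t) 1 = M x y t :=
        min_eq_left (hM.mem_Icc x y t).2
      rw [h3] at h2
      simpa using h2.trans (le_of_eq (by ring_nf))
  set a := M x y (t₀ + 1) with ha
  by_contra hne
  have hlt : a < 1 := lt_of_le_of_ne (hM.mem_Icc x y (t₀ + 1)).2 hne
  set lam : ℝ := (a + 1) / 2 with hlam
  have hal : a < lam := by rw [hlam]; linarith
  have hl1 : lam < 1 := by rw [hlam]; linarith
  -- eventually Delta ≥ t₀ + 1
  have hev : ∀ᶠ l in nhdsWithin (1:ℝ) (Set.Iio 1), t₀ + 1 ≤ Delta M l x y := by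
    filter_upwards [Ioo_mem_nhdsLT_of_mem (show (1:ℝ) ∈ Set.Ioc lam 1 from ⟨hl1, le_refl 1⟩)]
      with l hl
    obtain ⟨hll, hl1'⟩ := hl
    have hne' : {t : ℝ | l < M x y t}.Nonempty := by
      by_cases hxy : x = y
      · refine ⟨1, ?_⟩
        have : M x y 1 = 1 := by
          subst hxy; exact ((hM.km2 x x).mpr rfl) 1 one_pos
        simp only [Set.mem_setOf_eq, this]; exact hl1'
      · have := (hM.km5_lim x y hxy).eventually (eventually_gt_nhds hl1')
        obtain ⟨t, ht⟩ := this.exists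
        exact ⟨t, ht⟩
    refine le_csInf hne' ?_
    intro t ht
    by_contra hcon
    push_neg at hcon
    have : M x y t ≤ a := hmono t (t₀ + 1) hcon.le
    have : M x y t < l := lt_of_le_of_lt this (hal.trans hll)
    exact absurd ht (by simp [Set.mem_setOf_eq]; linarith)
  have : t₀ + 1 ≤ t₀ := ge_of_tendsto hlim hev
  linarith
end

section
/- Let M be a fuzzy metric on X satisfying the finite distance condition. Then for every x,y ∈ X, lim_{λ→1⁻} δ_{M,λ}(x,y) = lim_{λ→1⁻} Δ_{M,λ}(x,y); equivalently, sup_{λ∈(0,1)} δ_{M,λ}(x,y) = sup_{λ∈(0,1)} Δ_{M,λ}(x,y). -/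
open Filter Set Topology

theorem limits_eq {X : Type*} (M : X → X → ℝ → ℝ) (hM : IsFuzzyMetric M)
    (hFD : ∀ x y : X, ∃ t : ℝ, M x y t = 1) :
    ∀ x y : X, ∃ L : ℝ,
      Filter.Tendsto (fun lam => delta M lam x y)
        (nhdsWithin (1:ℝ) (Set.Iio 1)) (nhds L) ∧
      Filter.Tendsto (fun lam => Delta M lam x y)
        (nhdsWithin (1:ℝ) (Set.Iio 1)) (nhds L) := by
  intro x y
  obtain ⟨t₀, ht₀⟩ := hFD x y
  -- monotonicity
  have hmono : ∀ s t : ℝ, s ≤ t → M x y s ≤ M x y t := by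
    intro s t hst
    rcases eq_or_lt_of_le hst with h | h
    · rw [h]
    · have h1 : M x x (t - s) = 1 := ((hM.km2 x x).mpr rfl) _ (by linarith)
      have h4 := hM.km4 x x y (t - s) s
      rw [h1] at h4
      have hle := (hM.mem_Icc x y s).2
      rw [min_eq_right hle] at h4
      have : t - s + s = t := by ring
      rwa [this] at h4
  set S1 : Set ℝ := {t : ℝ | M x y t = 1} with hS1
  have ht₀S : t₀ ∈ S1 := ht₀
  have hS1ne : S1.Nonempty := ⟨t₀, ht₀⟩
  have hS1pos : ∀ t ∈ S1, (0:ℝ) < t := by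
    intro t ht
    by_contra h
    push_neg at h
    have h0 := hM.km1 x y t h
    have ht' : M x y t = 1 := ht
    rw [h0] at ht'
    norm_num at ht'
  have hS1bdd : BddBelow S1 := ⟨0, fun t ht => (hS1pos t ht).le⟩
  refine ⟨sInf S1, ?_⟩
  set L := sInf S1 with hL
  have hLeps : ∀ ε : ℝ, 0 < ε → M x y (L - ε) < 1 := by
    intro ε hε
    rcases lt_or_eq_of_le (hM.mem_Icc x y (L - ε)).2 with h | h
    · exact h
    · exfalso
      have : L ≤ L - ε := csInf_le hS1bdd h
      linarith
  -- key bounds for lam in (μ, 1)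
  have hAbdd : ∀ lam : ℝ, lam < 1 → BddAbove {t : ℝ | M x y t < lam} := by
    intro lam hlam
    refine ⟨t₀, fun t ht => ?_⟩
    by_contra h
    push_neg at h
    have := hmono t₀ t h.le
    rw [ht₀] at this
    simp only [Set.mem_setOf_eq] at ht
    linarith
  have hAne : ∀ lam : ℝ, 0 < lam → ({t : ℝ | M x y t < lam}).Nonempty := by
    intro lam hlam
    exact ⟨0, by simpa [hM.km1 x y 0 le_rfl] using hlam⟩
  have hBbdd : ∀ lam : ℝ, 0 ≤ lam → BddBelow {t : ℝ | lam < M x y t} := by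
    intro lam hlam
    refine ⟨0, fun t ht => ?_⟩
    by_contra h
    push_neg at h
    simp only [Set.mem_setOf_eq] at ht
    rw [hM.km1 x y t h.le] at ht
    linarith
  have hdD : ∀ lam : ℝ, 0 < lam → lam < 1 → delta M lam x y ≤ Delta M lam x y := by
    intro lam h0 h1
    refine le_csInf ⟨t₀, by simpa [Set.mem_setOf_eq, ht₀] using h1⟩ (fun s hs => ?_)
    refine csSup_le (hAne lam h0) (fun t ht => ?_)
    simp only [Set.mem_setOf_eq] at hs ht
    by_contra h
    push_neg at h
    have := hmono s t h.le
    linarith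
  have hDL : ∀ lam : ℝ, 0 ≤ lam → lam < 1 → Delta M lam x y ≤ L := by
    intro lam h0 h1
    exact csInf_le_csInf (hBbdd lam h0) hS1ne (fun t ht => by
      simp only [Set.mem_setOf_eq] at ht ⊢; rw [ht]; exact h1)
  have hlow : ∀ ε : ℝ, 0 < ε → ∀ lam : ℝ, M x y (L - ε) < lam → lam < 1 →
      L - ε ≤ delta M lam x y := by
    intro ε hε lam hμ h1
    exact le_csSup (hAbdd lam h1) hμ
  -- conclude both limits
  have key : ∀ ε : ℝ, 0 < ε → ∀ᶠ lam in nhdsWithin (1:ℝ) (Set.Iio 1),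
      L - ε ≤ delta M lam x y ∧ delta M lam x y ≤ L ∧ Delta M lam x y ≤ L ∧
        delta M lam x y ≤ Delta M lam x y := by
    intro ε hε
    set μ : ℝ := max (M x y (L - ε)) 0 with hμdef
    have hμ1 : μ < 1 := by
      have h1 := hLeps ε hε
      simp only [hμdef, max_lt_iff]
      exact ⟨h1, one_pos⟩
    have hmem : Set.Ioo μ 1 ∈ nhdsWithin (1:ℝ) (Set.Iio 1) :=
      Ioo_mem_nhdsLT_of_mem ⟨hμ1, le_rfl⟩
    filter_upwards [hmem] with lam hlam
    obtain ⟨hlamμ, hlam1⟩ := hlam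
    have h0 : 0 < lam := lt_of_le_of_lt (le_max_right _ _) hlamμ
    have hμlt : M x y (L - ε) < lam := lt_of_le_of_lt (le_max_left _ _) hlamμ
    refine ⟨hlow ε hε lam hμlt hlam1, ?_, hDL lam h0.le hlam1, hdD lam h0 hlam1⟩
    exact le_trans (hdD lam h0 hlam1) (hDL lam h0.le hlam1)
  constructor
  · rw [Metric.tendsto_nhds]
    intro ε hε
    filter_upwards [key (ε/2) (by linarith)] with lam ⟨h1, h2, _, _⟩
    rw [Real.dist_eq, abs_lt]
    constructor <;> linarith
  · rw [Metric.tendsto_nhds]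
    intro ε hε
    filter_upwards [key (ε/2) (by linarith)] with lam ⟨h1, _, h3, h4⟩
    rw [Real.dist_eq, abs_lt]
    constructor <;> linarith
end

section
/- Let M be a fuzzy metric on X satisfying the finite distance condition. Then d_M(x,y) := sup_{λ∈(0,1)} Δ_{M,λ}(x,y) defines a metric on X. -/
open Filter Set Topology

noncomputable def dM {X : Type*} (M : X → X → ℝ → ℝ) (x y : X) : ℝ :=
  sSup ((fun lam => Delta M lam x y) '' Set.Ioo (0:ℝ) 1)

section Aux
variable {X : Type*} {M : X → X → ℝ → ℝ}

lemma setS_subset (hM : IsFuzzyMetric M) (x y : X) {lam : ℝ} (hl : 0 < lam) :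
    {t : ℝ | lam < M x y t} ⊆ Set.Ioi 0 := by
  intro t ht
  by_contra h
  simp only [Set.mem_Ioi, not_lt] at h
  rw [Set.mem_setOf_eq, hM.km1 x y t h] at ht
  exact absurd ht (not_lt.mpr hl.le)

lemma setS_bddBelow (hM : IsFuzzyMetric M) (x y : X) {lam : ℝ} (hl : 0 < lam) :
    BddBelow {t : ℝ | lam < M x y t} :=
  ⟨0, fun t ht => (setS_subset hM x y hl ht).le⟩

lemma setS_nonempty (hFD : ∀ x y : X, ∃ t : ℝ, M x y t = 1) (x y : X) {lam : ℝ}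
    (hl1 : lam < 1) : {t : ℝ | lam < M x y t}.Nonempty := by
  obtain ⟨t0, ht0⟩ := hFD x y
  exact ⟨t0, by simpa [Set.mem_setOf_eq, ht0] using hl1⟩

lemma Delta_nonneg (hM : IsFuzzyMetric M) (hFD : ∀ x y : X, ∃ t : ℝ, M x y t = 1)
    (x y : X) {lam : ℝ} (hl : 0 < lam) (hl1 : lam < 1) : 0 ≤ Delta M lam x y :=
  le_csInf (setS_nonempty hFD x y hl1) fun t ht => (setS_subset hM x y hl ht).le

lemma bddAbove_image (hM : IsFuzzyMetric M) (hFD : ∀ x y : X, ∃ t : ℝ, M x y t = 1)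
    (x y : X) : BddAbove ((fun lam => Delta M lam x y) '' Set.Ioo (0:ℝ) 1) := by
  obtain ⟨t0, ht0⟩ := hFD x y
  refine ⟨t0, ?_⟩
  rintro d ⟨lam, hlam, rfl⟩
  exact csInf_le (setS_bddBelow hM x y hlam.1) (by simp [Set.mem_setOf_eq, ht0, hlam.2])

lemma Delta_le_dM (hM : IsFuzzyMetric M) (hFD : ∀ x y : X, ∃ t : ℝ, M x y t = 1)
    (x y : X) {lam : ℝ} (hlam : lam ∈ Set.Ioo (0:ℝ) 1) :
    Delta M lam x y ≤ dM M x y :=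
  le_csSup (bddAbove_image hM hFD x y) ⟨lam, hlam, rfl⟩

lemma dM_nonneg (hM : IsFuzzyMetric M) (hFD : ∀ x y : X, ∃ t : ℝ, M x y t = 1)
    (x y : X) : 0 ≤ dM M x y := by
  have h2 : ((1:ℝ)/2) ∈ Set.Ioo (0:ℝ) 1 := by norm_num
  exact le_trans (Delta_nonneg hM hFD x y h2.1 h2.2) (Delta_le_dM hM hFD x y h2)

lemma Delta_triangle (hM : IsFuzzyMetric M) (hFD : ∀ x y : X, ∃ t : ℝ, M x y t = 1)
    (x y z : X) {lam : ℝ} (hlam : lam ∈ Set.Ioo (0:ℝ) 1) :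
    Delta M lam x z ≤ Delta M lam x y + Delta M lam y z := by
  refine le_of_forall_pos_le_add fun ε hε => ?_
  obtain ⟨t, ht, htlt⟩ :=
    Real.lt_sInf_add_pos (setS_nonempty hFD x y hlam.2) (half_pos hε)
  obtain ⟨s, hs, hslt⟩ :=
    Real.lt_sInf_add_pos (setS_nonempty hFD y z hlam.2) (half_pos hε)
  have hmem : lam < M x z (t + s) :=
    lt_of_lt_of_le (lt_min ht hs) (hM.km4 x y z t s)
  have h1 : Delta M lam x z ≤ t + s := csInf_le (setS_bddBelow hM x z hlam.1) hmem
  have h2 : Delta M lam x y + Delta M lam y z = sInf {t : ℝ | lam < M x y t} +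
      sInf {t : ℝ | lam < M y z t} := rfl
  rw [h2]
  linarith

end Aux

theorem dM_isMetric {X : Type*} (M : X → X → ℝ → ℝ) (hM : IsFuzzyMetric M)
    (hFD : ∀ x y : X, ∃ t : ℝ, M x y t = 1) :
    (∀ x y : X, 0 ≤ dM M x y) ∧
    (∀ x y : X, dM M x y = 0 ↔ x = y) ∧
    (∀ x y : X, dM M x y = dM M y x) ∧
    (∀ x y z : X, dM M x z ≤ dM M x y + dM M y z) := by
  have himg_ne : ∀ x y : X, ((fun lam => Delta M lam x y) '' Set.Ioo (0:ℝ) 1).Nonempty :=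
    fun x y => ⟨Delta M (1/2) x y, ⟨1/2, by norm_num, rfl⟩⟩
  refine ⟨dM_nonneg hM hFD, ?_, ?_, ?_⟩
  · -- dM = 0 ↔ x = y
    intro x y
    constructor
    · intro h0
      by_contra hxy
      have hsdp := hM.sdp x y hxy
      have hev : ∀ᶠ t in nhdsWithin 0 (Set.Ioi 0), M x y t < 1/2 :=
        hsdp.eventually_lt_const (by norm_num)
      obtain ⟨u, hu, hsub⟩ := mem_nhdsGT_iff_exists_Ioo_subset.mp hev
      have hu0 : (0:ℝ) < u := hu
      have hdge : u ≤ Delta M (1/2) x y := by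
        refine le_csInf (setS_nonempty hFD x y (by norm_num)) fun t ht => ?_
        by_contra htu
        push_neg at htu
        have htpos : (0:ℝ) < t := setS_subset hM x y (by norm_num) ht
        have h1 := hsub ⟨htpos, htu⟩
        have h2 : 1/2 < M x y t := ht
        simp only [Set.mem_setOf_eq] at h1
        linarith
      have : u ≤ dM M x y :=
        le_trans hdge (Delta_le_dM hM hFD x y (by norm_num))
      linarith [h0 ▸ this]
    · rintro rfl
      have hset : ∀ lam ∈ Set.Ioo (0:ℝ) 1, {t : ℝ | lam < M x x t} = Set.Ioi 0 := by
        intro lam hlam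
        ext t
        simp only [Set.mem_setOf_eq, Set.mem_Ioi]
        constructor
        · intro ht; exact setS_subset hM x x hlam.1 ht
        · intro ht; rw [(hM.km2 x x).mpr rfl t ht]; exact hlam.2
      refine le_antisymm ?_ (dM_nonneg hM hFD x x)
      refine csSup_le (himg_ne x x) ?_
      rintro d ⟨lam, hlam, rfl⟩
      simp only [Delta, hset lam hlam, csInf_Ioi, le_refl]
  · -- symmetry
    intro x y
    have : (fun lam => Delta M lam x y) = fun lam => Delta M lam y x := by
      funext lam
      unfold Delta
      congr 1
      ext t
      simp [hM.km3 x y t]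
    unfold dM
    rw [this]
  · -- triangle
    intro x y z
    refine csSup_le (himg_ne x z) ?_
    rintro d ⟨lam, hlam, rfl⟩
    calc Delta M lam x z ≤ Delta M lam x y + Delta M lam y z :=
          Delta_triangle hM hFD x y z hlam
      _ ≤ dM M x y + dM M y z :=
          add_le_add (Delta_le_dM hM hFD x y hlam) (Delta_le_dM hM hFD y z hlam)
end

section
/- Let M be a fuzzy metric on X satisfying the finite distance condition, and let d_M(x,y) = sup_{λ∈(0,1)} inf{t : M(x,y,t) > λ}. Then for every x₀ ∈ X, r₀ > 0, and ε₀ ∈ (0,1), the d_M-open ball B(x₀,r₀) = {y : d_M(x₀,y) < r₀} is contained in the fuzzy open ball B(x₀,r₀,ε₀) = {y : M(x₀,y,r₀) > 1−ε₀}. Consequently, the topology induced by d_M is finer than the topology generated by the fuzzy open balls of M. -/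
open Filter Set Topology

lemma fz_mono {X : Type*} {M : X → X → ℝ → ℝ} (hM : IsFuzzyMetric M)
    (x y : X) {t s : ℝ} (hts : t ≤ s) : M x y t ≤ M x y s := by
  rcases le_or_gt t 0 with ht | ht
  · rw [hM.km1 x y t ht]; exact (hM.mem_Icc x y s).1
  rcases eq_or_lt_of_le hts with rfl | hts'
  · exact le_rfl
  have h4 := hM.km4 x x y (s - t) t
  have h1 : M x x (s - t) = 1 := (hM.km2 x x).mpr rfl (s - t) (by linarith)
  rw [h1, show s - t + t = s by ring] at h4
  calc M x y t = min 1 (M x y t) := by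
        rw [min_eq_right (hM.mem_Icc x y t).2]
    _ ≤ M x y s := h4

lemma exists_of_dM_lt {X : Type*} {M : X → X → ℝ → ℝ} (hM : IsFuzzyMetric M)
    (hFD : ∀ x y : X, ∃ t : ℝ, M x y t = 1)
    {x y : X} {r lam : ℝ} (hlam : lam ∈ Set.Ioo (0:ℝ) 1)
    (h : dM M x y < r) : ∃ s, s < r ∧ lam < M x y s := by
  obtain ⟨t₀, ht₀⟩ := hFD x y
  have hmem : ∀ l : ℝ, l < 1 → t₀ ∈ {t : ℝ | l < M x y t} := by
    intro l hl; simpa [ht₀] using hl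
  have hbb : ∀ l : ℝ, 0 < l → BddBelow {t : ℝ | l < M x y t} := by
    intro l hl
    refine ⟨0, fun t ht => ?_⟩
    by_contra hneg
    push_neg at hneg
    have := hM.km1 x y t hneg.le
    simp only [Set.mem_setOf_eq, this] at ht
    linarith
  have hDle : Delta M lam x y ≤ dM M x y := by
    apply le_csSup
    · refine ⟨t₀, fun a ha => ?_⟩
      obtain ⟨l, hl, rfl⟩ := ha
      exact csInf_le (hbb l hl.1) (hmem l hl.2)
    · exact ⟨lam, hlam, rfl⟩
  have hlt : sInf {t : ℝ | lam < M x y t} < r := lt_of_le_of_lt hDle h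
  obtain ⟨s, hs, hsr⟩ := exists_lt_of_csInf_lt ⟨t₀, hmem lam hlam.2⟩ hlt
  exact ⟨s, hsr, hs⟩

lemma dM_ball_sub {X : Type*} {M : X → X → ℝ → ℝ} (hM : IsFuzzyMetric M)
    (hFD : ∀ x y : X, ∃ t : ℝ, M x y t = 1)
    (x : X) {r ε : ℝ} (hr : 0 < r) (hε : ε ∈ Set.Ioo (0:ℝ) 1) :
    {y : X | dM M x y < r} ⊆ {y : X | 1 - ε < M x y r} := by
  intro y hy
  obtain ⟨s, hsr, hs⟩ := exists_of_dM_lt hM hFD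
    (show 1 - ε ∈ Set.Ioo (0:ℝ) 1 by constructor <;> · simp; linarith [hε.1, hε.2]) hy
  exact lt_of_lt_of_le hs (fz_mono hM x y hsr.le)

lemma dM_self {X : Type*} {M : X → X → ℝ → ℝ} (hM : IsFuzzyMetric M) (x : X) :
    dM M x x = 0 := by
  have hset : ∀ lam ∈ Set.Ioo (0:ℝ) 1, {t : ℝ | lam < M x x t} = Set.Ioi 0 := by
    intro lam hlam
    ext t
    simp only [Set.mem_setOf_eq, Set.mem_Ioi]
    constructor
    · intro h
      by_contra hneg
      push_neg at hneg
      rw [hM.km1 x x t hneg] at h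
      linarith [hlam.1]
    · intro ht
      rw [(hM.km2 x x).mpr rfl t ht]
      exact hlam.2
  have himg : (fun lam => Delta M lam x x) '' Set.Ioo (0:ℝ) 1 = {0} := by
    have : Set.EqOn (fun lam => Delta M lam x x) (fun _ => (0:ℝ)) (Set.Ioo (0:ℝ) 1) := by
      intro lam hlam
      simp only [Delta, hset lam hlam, csInf_Ioi]
    rw [Set.image_congr this, Set.Nonempty.image_const ⟨1/2, by norm_num⟩]
  rw [dM, himg, csSup_singleton]

theorem dM_ball_subset_fuzzyBall {X : Type*} (M : X → X → ℝ → ℝ)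
    (hM : IsFuzzyMetric M) (hFD : ∀ x y : X, ∃ t : ℝ, M x y t = 1)
    (x₀ : X) (r₀ : ℝ) (hr₀ : 0 < r₀) (ε₀ : ℝ) (hε₀ : ε₀ ∈ Set.Ioo (0:ℝ) 1) :
    {y : X | dM M x₀ y < r₀} ⊆ {y : X | 1 - ε₀ < M x₀ y r₀} ∧
    TopologicalSpace.generateFrom
        {s : Set X | ∃ (x : X) (r : ℝ), 0 < r ∧ s = {y : X | dM M x y < r}} ≤
      TopologicalSpace.generateFrom
        {s : Set X | ∃ (x : X) (r ε : ℝ), 0 < r ∧ ε ∈ Set.Ioo (0:ℝ) 1 ∧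
          s = {y : X | 1 - ε < M x y r}} := by
  set G₁ : Set (Set X) :=
    {s : Set X | ∃ (x : X) (r : ℝ), 0 < r ∧ s = {y : X | dM M x y < r}} with hG₁
  refine ⟨dM_ball_sub hM hFD x₀ hr₀ hε₀, ?_⟩
  letI : TopologicalSpace X := TopologicalSpace.generateFrom G₁
  apply le_generateFrom
  rintro s ⟨x, r, ε, hr, hε, rfl⟩
  -- show the fuzzy ball is open in generateFrom G₁
  have key : ∀ y₀ ∈ {y : X | 1 - ε < M x y r}, ∃ u ∈ G₁,
      y₀ ∈ u ∧ u ⊆ {y : X | 1 - ε < M x y r} := by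
    intro y₀ hy₀
    by_cases hxy : x = y₀
    · subst hxy
      refine ⟨{y : X | dM M x y < r}, ⟨x, r, hr, rfl⟩, ?_, dM_ball_sub hM hFD x hr hε⟩
      simp [dM_self hM x, hr]
    · -- left continuity at r gives t < r with 1 - ε < M x y₀ t
      have hcont := hM.km5_left_cont x y₀ hxy r
      have hev : ∀ᶠ t in nhdsWithin r (Set.Iio r), 1 - ε < M x y₀ t :=
        hcont (Ioi_mem_nhds hy₀)
      obtain ⟨t, htr, ht⟩ : ∃ t, t < r ∧ 1 - ε < M x y₀ t := by
        rcases (hev.and self_mem_nhdsWithin).exists with ⟨t, h1, h2⟩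
        exact ⟨t, h2, h1⟩
      refine ⟨{y : X | dM M y₀ y < r - t}, ⟨y₀, r - t, by linarith, rfl⟩, ?_, ?_⟩
      · simp only [Set.mem_setOf_eq, dM_self hM y₀]; linarith
      · intro y hy
        obtain ⟨s, hsd, hs⟩ := exists_of_dM_lt hM hFD
          (show 1 - ε ∈ Set.Ioo (0:ℝ) 1 by
            constructor <;> · simp; linarith [hε.1, hε.2]) hy
        have h4 := hM.km4 x y₀ y t s
        have hmin : 1 - ε < min (M x y₀ t) (M y₀ y s) := lt_min ht hs
        have : 1 - ε < M x y (t + s) := lt_of_lt_of_le hmin h4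
        exact lt_of_lt_of_le this (fz_mono hM x y (by linarith))
  have hUnion : {y : X | 1 - ε < M x y r} = ⋃₀ {u | u ∈ G₁ ∧ u ⊆ {y : X | 1 - ε < M x y r}} := by
    ext y₀
    constructor
    · intro hy₀
      obtain ⟨u, hu, hyu, hus⟩ := key y₀ hy₀
      exact ⟨u, ⟨hu, hus⟩, hyu⟩
    · rintro ⟨u, ⟨_, hus⟩, hyu⟩
      exact hus hyu
  rw [hUnion]
  exact isOpen_sUnion fun u hu => TopologicalSpace.GenerateOpen.basic u hu.1
end

section
/- Define M : ℝ × ℝ × ℝ → [0,1] by M(x,y,t) = 0 for t ≤ 0; M(x,y,t) = 1 if x = y and t > 0; M(x,y,t) = t/(t+|x−y|) if x ≠ y and 0 < t ≤ 2; M(x,y,t) = 1 if x ≠ y and t > 2. Then M is a fuzzy metric on ℝ satisfying the finite distance condition, and the induced metric satisfies d_M(x,y) = 2 for all x ≠ y. -/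
open Filter Set Topology

noncomputable def Mex (x y t : ℝ) : ℝ :=
  if t ≤ 0 then 0
  else if x = y then 1
  else if t ≤ 2 then t / (t + |x - y|)
  else 1

lemma Mex_of_nonpos {x y t : ℝ} (ht : t ≤ 0) : Mex x y t = 0 := if_pos ht

lemma Mex_of_eq {x y t : ℝ} (h : x = y) (ht : 0 < t) : Mex x y t = 1 := by
  simp [Mex, not_le.2 ht, h]

lemma Mex_of_ne {x y t : ℝ} (h : x ≠ y) (ht : 0 < t) (ht2 : t ≤ 2) :
    Mex x y t = t / (t + |x - y|) := by
  simp [Mex, not_le.2 ht, h, ht2]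

lemma Mex_of_gt {x y t : ℝ} (ht : 2 < t) : Mex x y t = 1 := by
  have h0 : ¬ t ≤ 0 := by linarith
  have h2 : ¬ t ≤ 2 := not_le.2 ht
  by_cases h : x = y <;> simp [Mex, h0, h, h2]

lemma Mex_mem (x y t : ℝ) : Mex x y t ∈ Set.Icc (0:ℝ) 1 := by
  rcases le_or_gt t 0 with ht | ht
  · rw [Mex_of_nonpos ht]; constructor <;> norm_num
  · by_cases h : x = y
    · rw [Mex_of_eq h ht]; constructor <;> norm_num
    · rcases le_or_gt t 2 with ht2 | ht2
      · rw [Mex_of_ne h ht ht2]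
        have ha : 0 < |x - y| := abs_pos.2 (sub_ne_zero.2 h)
        constructor
        · positivity
        · rw [div_le_one (by linarith)]; linarith
      · rw [Mex_of_gt ht2]; constructor <;> norm_num

lemma mono_div {s t c : ℝ} (hs : 0 < s) (hc : 0 < c) (hst : s ≤ t) :
    s / (s + c) ≤ t / (t + c) := by
  rw [div_le_div_iff₀ (by linarith) (by linarith)]
  nlinarith

lemma Mex_eq_g {x y : ℝ} (h : x ≠ y) {u : ℝ} (hu : u ≤ 2) :
    Mex x y u = max u 0 / (max u 0 + |x - y|) := by
  have ha : 0 < |x - y| := abs_pos.2 (sub_ne_zero.2 h)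
  rcases le_or_gt u 0 with h0 | h0
  · rw [Mex_of_nonpos h0, max_eq_right h0]
    simp
  · rw [Mex_of_ne h h0 hu, max_eq_left h0.le]

lemma g_cont (a : ℝ) (ha : 0 < a) :
    Continuous (fun u : ℝ => max u 0 / (max u 0 + a)) := by
  apply Continuous.div (by continuity) (by continuity)
  intro u
  have h : (0:ℝ) ≤ max u 0 := le_max_right u 0
  have : 0 < max u 0 + a := by linarith
  exact this.ne'

theorem example_fuzzyMetric :
    IsFuzzyMetric Mex ∧ (∀ x y : ℝ, ∃ t : ℝ, Mex x y t = 1) ∧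
    (∀ x y : ℝ, x ≠ y → dM Mex x y = 2) := by
  refine ⟨⟨Mex_mem, ?_, ?_, ?_, ?_, ?_, ?_, ?_⟩, ?_, ?_⟩
  · -- km1
    intro x y t ht; exact Mex_of_nonpos ht
  · -- km2
    intro x y
    constructor
    · intro h
      by_contra hxy
      have ha : 0 < |x - y| := abs_pos.2 (sub_ne_zero.2 hxy)
      have h1 := h 1 one_pos
      rw [Mex_of_ne hxy one_pos (by norm_num)] at h1
      rw [div_eq_one_iff_eq (by linarith)] at h1
      linarith
    · intro h t ht; exact Mex_of_eq h ht
  · -- km3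
    intro x y t
    have : |x - y| = |y - x| := abs_sub_comm x y
    by_cases h : x = y
    · subst h; rfl
    · have h' : y ≠ x := fun hh => h hh.symm
      unfold Mex
      simp [h, h', this]
  · -- km4
    intro x y z t s
    rcases le_or_gt t 0 with ht | ht
    · calc min (Mex x y t) (Mex y z s) ≤ Mex x y t := min_le_left _ _
        _ = 0 := Mex_of_nonpos ht
        _ ≤ _ := (Mex_mem x z (t+s)).1
    rcases le_or_gt s 0 with hs | hs
    · calc min (Mex x y t) (Mex y z s) ≤ Mex y z s := min_le_right _ _
        _ = 0 := Mex_of_nonpos hs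
        _ ≤ _ := (Mex_mem x z (t+s)).1
    have hts : 0 < t + s := by linarith
    rcases le_or_gt (t+s) 2 with hts2 | hts2
    swap
    · rw [Mex_of_gt hts2]
      calc min (Mex x y t) (Mex y z s) ≤ Mex x y t := min_le_left _ _
        _ ≤ 1 := (Mex_mem x y t).2
    by_cases hxz : x = z
    · rw [Mex_of_eq hxz hts]
      calc min (Mex x y t) (Mex y z s) ≤ Mex x y t := min_le_left _ _
        _ ≤ 1 := (Mex_mem x y t).2
    have ht2 : t ≤ 2 := by linarith
    have hs2 : s ≤ 2 := by linarith
    have hc : 0 < |x - z| := abs_pos.2 (sub_ne_zero.2 hxz)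
    rw [Mex_of_ne hxz hts hts2]
    by_cases hxy : x = y
    · have hyz : y ≠ z := fun hh => hxz (hxy.trans hh)
      have hbc : |y - z| = |x - z| := by rw [hxy]
      calc min (Mex x y t) (Mex y z s) ≤ Mex y z s := min_le_right _ _
        _ = s / (s + |x - z|) := by rw [Mex_of_ne hyz hs hs2, hbc]
        _ ≤ (t+s) / ((t+s) + |x - z|) := mono_div hs hc (by linarith)
    by_cases hyz : y = z
    · have hac : |x - y| = |x - z| := by rw [hyz]
      calc min (Mex x y t) (Mex y z s) ≤ Mex x y t := min_le_left _ _
        _ = t / (t + |x - z|) := by rw [Mex_of_ne hxy ht ht2, hac]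
        _ ≤ (t+s) / ((t+s) + |x - z|) := mono_div ht hc (by linarith)
    -- generic mediant case
    have ha : 0 < |x - y| := abs_pos.2 (sub_ne_zero.2 hxy)
    have hb : 0 < |y - z| := abs_pos.2 (sub_ne_zero.2 hyz)
    have htri : |x - z| ≤ |x - y| + |y - z| := abs_sub_le x y z
    rw [Mex_of_ne hxy ht ht2, Mex_of_ne hyz hs hs2]
    set a := |x - y|; set b := |y - z|; set c := |x - z|
    have h2 : (t+s) / ((t+s) + (a+b)) ≤ (t+s) / (t+s+c) := by
      apply div_le_div_of_nonneg_left hts.le (by linarith)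
      linarith
    have key : t/(t+a) ≤ (t+s)/((t+s)+(a+b)) ∨ s/(s+b) ≤ (t+s)/((t+s)+(a+b)) := by
      rcases le_total (t*b) (s*a) with h | h
      · left; rw [div_le_div_iff₀ (by linarith) (by linarith)]; nlinarith
      · right; rw [div_le_div_iff₀ (by linarith) (by linarith)]; nlinarith
    rcases key with h | h
    · exact le_trans (le_trans (min_le_left _ _) h) h2
    · exact le_trans (le_trans (min_le_right _ _) h) h2
  · -- km5_left_cont
    intro x y hxy t
    have ha : 0 < |x - y| := abs_pos.2 (sub_ne_zero.2 hxy)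
    rcases le_or_gt t 2 with ht | ht
    · have heq : (fun u : ℝ => max u 0 / (max u 0 + |x - y|)) =ᶠ[𝓝[<] t] Mex x y := by
        filter_upwards [self_mem_nhdsWithin] with u hu
        exact (Mex_eq_g hxy (le_of_lt (lt_of_lt_of_le hu ht))).symm
      have htend : Filter.Tendsto (fun u : ℝ => max u 0 / (max u 0 + |x - y|))
          (𝓝[<] t) (𝓝 (max t 0 / (max t 0 + |x - y|))) :=
        ((g_cont _ ha).tendsto t).mono_left nhdsWithin_le_nhds
      rw [Mex_eq_g hxy ht]
      exact htend.congr' heq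
    · rw [Mex_of_gt ht]
      have hmem : Set.Ioi (2:ℝ) ∈ 𝓝[<] t :=
        mem_nhdsWithin_of_mem_nhds (Ioi_mem_nhds ht)
      have heq : (fun _ : ℝ => (1:ℝ)) =ᶠ[𝓝[<] t] Mex x y := by
        filter_upwards [hmem] with u hu
        exact (Mex_of_gt hu).symm
      exact tendsto_const_nhds.congr' heq
  · -- km5_lim
    intro x y _
    have heq : (fun _ : ℝ => (1:ℝ)) =ᶠ[Filter.atTop] Mex x y := by
      filter_upwards [eventually_gt_atTop (2:ℝ)] with u hu
      exact (Mex_of_gt hu).symm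
    exact tendsto_const_nhds.congr' heq
  · -- sdp
    intro x y hxy
    have ha : 0 < |x - y| := abs_pos.2 (sub_ne_zero.2 hxy)
    have hmem : Set.Iio (2:ℝ) ∈ 𝓝[>] (0:ℝ) :=
      mem_nhdsWithin_of_mem_nhds (Iio_mem_nhds (by norm_num))
    have heq : (fun u : ℝ => max u 0 / (max u 0 + |x - y|)) =ᶠ[𝓝[>] (0:ℝ)] Mex x y := by
      filter_upwards [hmem] with u hu
      exact (Mex_eq_g hxy hu.le).symm
    have htend : Filter.Tendsto (fun u : ℝ => max u 0 / (max u 0 + |x - y|))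
        (𝓝[>] (0:ℝ)) (𝓝 (max 0 0 / (max 0 0 + |x - y|))) :=
      ((g_cont _ ha).tendsto 0).mono_left nhdsWithin_le_nhds
    have h0 : max (0:ℝ) 0 / (max (0:ℝ) 0 + |x - y|) = 0 := by simp
    rw [h0] at htend
    exact htend.congr' heq
  · -- FD
    intro x y
    exact ⟨3, Mex_of_gt (by norm_num)⟩
  · -- dM = 2
    intro x y hxy
    have ha : 0 < |x - y| := abs_pos.2 (sub_ne_zero.2 hxy)
    set a := |x - y| with ha_def
    have hDle : ∀ lam ∈ Set.Ioo (0:ℝ) 1, Delta Mex lam x y ≤ 2 := by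
      intro lam hlam
      have hbdd : BddBelow {t : ℝ | lam < Mex x y t} := by
        refine ⟨0, fun t htm => ?_⟩
        by_contra hneg
        push_neg at hneg
        rw [Set.mem_setOf_eq, Mex_of_nonpos hneg.le] at htm
        linarith [hlam.1]
      have hsub : Set.Ioi (2:ℝ) ⊆ {t : ℝ | lam < Mex x y t} := by
        intro t htm
        rw [Set.mem_setOf_eq, Mex_of_gt htm]
        exact hlam.2
      calc Delta Mex lam x y ≤ sInf (Set.Ioi (2:ℝ)) :=
            csInf_le_csInf hbdd ⟨3, by norm_num⟩ hsub
        _ = 2 := csInf_Ioi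
    have hlam0 : (2:ℝ)/(2+a) ∈ Set.Ioo (0:ℝ) 1 := by
      constructor
      · positivity
      · rw [div_lt_one (by linarith)]; linarith
    have hset : {t : ℝ | (2:ℝ)/(2+a) < Mex x y t} = Set.Ioi (2:ℝ) := by
      ext t
      simp only [Set.mem_setOf_eq, Set.mem_Ioi]
      constructor
      · intro h
        by_contra hle
        push_neg at hle
        rcases le_or_gt t 0 with h0 | h0
        · rw [Mex_of_nonpos h0] at h
          have : (0:ℝ) < 2/(2+a) := by positivity
          linarith
        · rw [Mex_of_ne hxy h0 hle] at h
          have : t / (t + a) ≤ 2 / (2 + a) := mono_div h0 ha hle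
          linarith
      · intro h
        rw [Mex_of_gt h]
        exact hlam0.2
    have hD2 : Delta Mex (2/(2+a)) x y = 2 := by
      unfold Delta
      rw [hset]
      exact csInf_Ioi
    have hmem2 : (2:ℝ) ∈ (fun lam => Delta Mex lam x y) '' Set.Ioo (0:ℝ) 1 :=
      ⟨2/(2+a), hlam0, hD2⟩
    unfold dM
    apply le_antisymm
    · apply csSup_le ⟨2, hmem2⟩
      rintro b ⟨lam, hlam, rfl⟩
      exact hDle lam hlam
    · apply le_csSup ⟨2, ?_⟩ hmem2
      rintro b ⟨lam, hlam, rfl⟩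
      exact hDle lam hlam
end
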